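/- Let f ∈ S* (starlike) with f(z) = z + Σ_{n≥2} a_n zⁿ, fix λ > 1, and write (f(z)/z)^{-λ} = 1 + Σ_{n≥1} a_n(-λ,f) zⁿ. Then |a_l(-λ,f)| ≤ Π_{j=0}^{l-1} (2λ-j)/(j+1) = binomial(2λ, l) for l = 1, 2, ..., [λ]+1, and this is sharp for the Koebe function k(z)=z/(1-z)². -/

import Mathlib

open Metric Complex

open Finset MeasureTheory Real
open scoped NNReal

lemma mem_ball_ofReal {r : ℝ} (h0 : 0 ≤ r) (h1 : r < 1) : (r : ℂ) ∈ ball (0:ℂ) 1 := by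
  simp only [mem_ball, dist_zero_right, Complex.norm_real, Real.norm_eq_abs,
    _root_.abs_of_nonneg h0]
  exact h1

lemma summable_coeff_aux {c : ℕ → ℂ} {g : ℂ → ℂ}
    (hg : ∀ z ∈ ball (0:ℂ) 1, HasSum (fun n => c n * z ^ n) (g z))
    {r : ℝ} (hr0 : 0 ≤ r) (hr : r < 1) : Summable (fun n => ‖c n‖ * r ^ n) := by
  obtain ⟨ρ, hrρ, hρ1⟩ : ∃ ρ, r < ρ ∧ ρ < 1 := ⟨(r+1)/2, by linarith, by linarith⟩
  have hρ0 : 0 < ρ := lt_of_le_of_lt hr0 hrρ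
  have hsum := (hg (ρ : ℂ) (mem_ball_ofReal hρ0.le hρ1)).summable
  have hb : ∀ n, ‖c n * (ρ:ℂ) ^ n‖ = ‖c n‖ * ρ ^ n := by
    intro n
    rw [norm_mul, norm_pow, Complex.norm_real, Real.norm_eq_abs, _root_.abs_of_nonneg hρ0.le]
  obtain ⟨M, hM⟩ := (hsum.tendsto_atTop_zero.norm.bddAbove_range).imp
    (fun M hM => fun n => hM (Set.mem_range_self n))
  simp only [hb] at hM
  refine Summable.of_nonneg_of_le (fun n => by positivity) (fun n => ?_)
    (((summable_geometric_of_lt_one (by positivity) (by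
      rw [div_lt_one hρ0]; exact hrρ)).mul_left M : Summable fun n => M * (r/ρ)^n))
  have h2 : ‖c n‖ * r ^ n = (‖c n‖ * ρ ^ n) * (r / ρ) ^ n := by
    rw [div_pow]; field_simp
  rw [h2]
  exact mul_le_mul_of_nonneg_right (hM n) (by positivity)

lemma hasDerivAt_of_hasSum {c : ℕ → ℂ} {g : ℂ → ℂ}
    (hg : ∀ z ∈ ball (0:ℂ) 1, HasSum (fun n => c n * z ^ n) (g z))
    {z : ℂ} (hz : z ∈ ball (0:ℂ) 1) :
    ∃ D, HasDerivAt g D z ∧ HasSum (fun n : ℕ => ((n:ℂ)+1) * c (n+1) * z ^ n) D := by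
  have hz1 : ‖z‖ < 1 := by simpa using hz
  obtain ⟨r, hzr, hr1⟩ : ∃ r, ‖z‖ < r ∧ r < 1 :=
    ⟨(‖z‖+1)/2, by linarith, by linarith⟩
  have hr0 : 0 < r := lt_of_le_of_lt (norm_nonneg z) hzr
  obtain ⟨ρ, hrρ, hρ1⟩ : ∃ ρ, r < ρ ∧ ρ < 1 := ⟨(r+1)/2, by linarith, by linarith⟩
  have hρ0 : 0 < ρ := hr0.trans hrρ
  have hsumρ : Summable (fun n => ‖c n‖ * ρ ^ n) := summable_coeff_aux hg hρ0.le hρ1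
  obtain ⟨M, hM⟩ := hsumρ.tendsto_atTop_zero.bddAbove_range.imp
    (fun M hM => fun n => hM (Set.mem_range_self n))
  have hM0 : 0 ≤ M := le_trans (by positivity : (0:ℝ) ≤ ‖c 0‖ * ρ ^ 0) (hM 0)
  have hx1 : r / ρ < 1 := by rw [div_lt_one hρ0]; exact hrρ
  have hx0 : (0:ℝ) ≤ r / ρ := by positivity
  have hus : Summable (fun n : ℕ => (M / ρ) * ((n : ℝ) * (r / ρ) ^ (n - 1))) := by
    apply Summable.mul_left
    rw [← summable_nat_add_iff 1]
    have S1 := summable_pow_mul_geometric_of_norm_lt_one (R := ℝ) 1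
      (r := r/ρ) (by rwa [Real.norm_eq_abs, _root_.abs_of_nonneg hx0])
    simp only [pow_one] at S1
    apply ((S1.add (summable_geometric_of_lt_one hx0 hx1)).congr (fun n => ?_))
    simp only [Nat.add_sub_cancel]
    push_cast
    ring
  have hder : ∀ n : ℕ, ∀ y ∈ ball (0:ℂ) r,
      HasDerivAt (fun y => c n * y ^ n) (c n * ((n:ℂ) * y ^ (n-1))) y :=
    fun n y _ => (hasDerivAt_pow n y).const_mul (c n)
  have hbound : ∀ n : ℕ, ∀ y ∈ ball (0:ℂ) r, ‖c n * ((n:ℂ) * y ^ (n-1))‖ ≤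
      (M / ρ) * ((n : ℝ) * (r / ρ) ^ (n - 1)) := by
    intro n y hy
    have hyr : ‖y‖ ≤ r := le_of_lt (by simpa using hy)
    have h1 : ‖c n * ((n:ℂ) * y ^ (n-1))‖ = ‖c n‖ * ((n : ℝ) * ‖y‖ ^ (n-1)) := by
      simp [norm_mul, norm_pow]
    rw [h1]
    have hcn : ‖c n‖ ≤ M / ρ ^ n := by
      rw [le_div_iff₀ (by positivity)]; exact hM n
    calc ‖c n‖ * ((n : ℝ) * ‖y‖ ^ (n-1)) ≤ (M / ρ ^ n) * ((n : ℝ) * r ^ (n-1)) := by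
          apply mul_le_mul hcn ?_ (by positivity) (by positivity)
          exact mul_le_mul_of_nonneg_left (pow_le_pow_left₀ (norm_nonneg y) hyr _) (Nat.cast_nonneg n)
      _ ≤ (M / ρ) * ((n : ℝ) * (r / ρ) ^ (n - 1)) := by
          rcases Nat.eq_zero_or_pos n with rfl | hn
          · simp
          · have hρn : ρ ^ n = ρ * ρ ^ (n-1) := by
              conv_lhs => rw [← Nat.succ_pred_eq_of_pos hn, pow_succ]
              rw [Nat.pred_eq_sub_one]; ring
            rw [hρn, div_pow]
            rw [div_mul_eq_mul_div]
            apply le_of_eq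
            field_simp
  have hsum0 : Summable fun n => c n * (0:ℂ) ^ n := by
    apply summable_of_ne_finset_zero (s := {0})
    intro n hn
    simp only [Finset.mem_singleton] at hn
    simp [zero_pow hn]
  have hball : ball (0:ℂ) r ⊆ ball (0:ℂ) 1 := ball_subset_ball hr1.le
  have hzmem : z ∈ ball (0:ℂ) r := by simpa using hzr
  have hDA := hasDerivAt_tsum_of_isPreconnected hus isOpen_ball
    (convex_ball (0:ℂ) r).isPreconnected hder hbound
    (mem_ball_self hr0) hsum0 hzmem
  have heq : (fun y => ∑' n, c n * y ^ n) =ᶠ[nhds z] g := by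
    filter_upwards [isOpen_ball.mem_nhds hzmem] with y hy
    exact (hg y (hball hy)).tsum_eq
  have hDg : HasDerivAt g (∑' n, c n * ((n:ℂ) * z ^ (n-1))) z := heq.hasDerivAt_iff.mp hDA
  have hws : Summable (fun n : ℕ => c n * ((n:ℂ) * z ^ (n-1))) :=
    Summable.of_norm_bounded hus (fun n => hbound n z hzmem)
  refine ⟨∑' n, c n * ((n:ℂ) * z ^ (n-1)), hDg, ?_⟩
  have h1 := (hasSum_nat_add_iff' (f := fun n : ℕ => c n * ((n:ℂ) * z ^ (n-1))) 1).mpr hws.hasSum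
  simp only [range_one, sum_singleton, Nat.cast_zero, zero_mul, mul_zero, sub_zero] at h1
  have he : (fun n : ℕ => ((n:ℂ)+1) * c (n+1) * z ^ n)
      = fun n : ℕ => c (n+1) * ((((n:ℕ)+1 : ℕ):ℂ) * z ^ ((n+1)-1)) := by
    funext n
    simp only [Nat.add_sub_cancel]
    push_cast
    ring
  rw [he]
  exact h1

lemma ofScalars_coeff (e : ℕ → ℂ) (n : ℕ) :
    (FormalMultilinearSeries.ofScalars ℂ e).coeff n = e n := by
  simp [FormalMultilinearSeries.coeff, FormalMultilinearSeries.ofScalars,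
    ContinuousMultilinearMap.mkPiAlgebraFin_apply, List.prod_ofFn]

lemma coeff_unique {c d : ℕ → ℂ} {g : ℂ → ℂ}
    (hc : ∀ z ∈ ball (0:ℂ) 1, HasSum (fun n => c n * z ^ n) (g z))
    (hd : ∀ z ∈ ball (0:ℂ) 1, HasSum (fun n => d n * z ^ n) (g z)) : c = d := by
  have key : ∀ (e : ℕ → ℂ), (∀ z ∈ ball (0:ℂ) 1, HasSum (fun n => e n * z ^ n) (g z)) →
      HasFPowerSeriesAt g (FormalMultilinearSeries.ofScalars ℂ e) 0 := by
    intro e he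
    rw [hasFPowerSeriesAt_iff]
    filter_upwards [ball_mem_nhds (0:ℂ) one_pos] with z hz
    have h2 := he z hz
    simp only [zero_add, ofScalars_coeff, smul_eq_mul]
    simpa only [mul_comm] using h2
  have := (key c hc).eq_formalMultilinearSeries (key d hd)
  exact FormalMultilinearSeries.ofScalars_series_injective ℂ ℂ this

lemma continuous_circle {c : ℕ → ℂ} {g : ℂ → ℂ}
    (hg : ∀ z ∈ ball (0:ℂ) 1, HasSum (fun n => c n * z ^ n) (g z))
    {r : ℝ} (hr0 : 0 ≤ r) (hr : r < 1) :
    Continuous fun θ : ℝ => g ((r:ℂ) * Complex.exp (θ * I)) := by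
  have hcirc : Continuous fun θ : ℝ => (r:ℂ) * Complex.exp (θ * I) :=
    continuous_const.mul (Complex.continuous_exp.comp
      (Complex.continuous_ofReal.mul continuous_const))
  rw [continuous_iff_continuousAt]
  intro θ
  have hmem : ((r:ℂ) * Complex.exp (θ * I)) ∈ ball (0:ℂ) 1 := by
    simp only [mem_ball, dist_zero_right, norm_mul, Complex.norm_real, Real.norm_eq_abs,
      _root_.abs_of_nonneg hr0, Complex.norm_exp_ofReal_mul_I, mul_one]
    exact hr
  obtain ⟨D, hD, -⟩ := hasDerivAt_of_hasSum hg hmem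
  have := ContinuousAt.comp (f := fun θ : ℝ => (r:ℂ) * Complex.exp (θ * I)) (g := g)
    (hD.differentiableAt.continuousAt) hcirc.continuousAt
  simpa [Function.comp_def] using this

lemma integral_circle_exp (k : ℤ) :
    ∫ θ in Set.Ioc (0:ℝ) (2*π), Complex.exp (k * θ * I) =
      if k = 0 then ((2*π : ℝ) : ℂ) else 0 := by
  rw [← intervalIntegral.integral_of_le (by positivity)]
  rcases eq_or_ne k 0 with rfl | hk
  · simp
  · rw [if_neg hk]
    have h1 : ∀ θ : ℝ, Complex.exp ((k:ℂ) * θ * I) = Complex.exp ((k * I) * θ) := by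
      intro θ; ring_nf
    simp_rw [h1]
    rw [integral_exp_mul_complex (by simp [hk, Complex.I_ne_zero])]
    have h2 : (k : ℂ) * I * ((2*π : ℝ) : ℂ) = k * (2 * π * I) := by push_cast; ring
    rw [h2, Complex.exp_int_mul_two_pi_mul_I]
    simp

lemma integral_coeff {c : ℕ → ℂ} {g : ℂ → ℂ}
    (hg : ∀ z ∈ ball (0:ℂ) 1, HasSum (fun n => c n * z ^ n) (g z))
    {r : ℝ} (hr0 : 0 < r) (hr : r < 1) (m : ℕ) :
    ∫ θ in Set.Ioc (0:ℝ) (2*π),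
        g ((r:ℂ) * Complex.exp (θ * I)) * Complex.exp (-(m:ℂ) * θ * I)
      = ((2*π : ℝ) : ℂ) * (c m * r ^ m) := by
  set F : ℕ → ℝ → ℂ := fun n θ => c n * ((r:ℂ) * Complex.exp (θ * I)) ^ n
      * Complex.exp (-(m:ℂ) * θ * I) with hF
  have habs : ∀ θ : ℝ, ‖Complex.exp ((θ:ℂ) * I)‖ = 1 := fun θ =>
    Complex.norm_exp_ofReal_mul_I θ
  have hmem : ∀ θ : ℝ, ((r:ℂ) * Complex.exp ((θ:ℂ) * I)) ∈ ball (0:ℂ) 1 := by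
    intro θ
    simp only [mem_ball, dist_zero_right, norm_mul, Complex.norm_real, Real.norm_eq_abs,
      _root_.abs_of_nonneg hr0.le, habs θ, mul_one]
    exact hr
  have hptsum : ∀ θ : ℝ, HasSum (fun n => F n θ)
      (g ((r:ℂ) * Complex.exp (θ * I)) * Complex.exp (-(m:ℂ) * θ * I)) := by
    intro θ
    exact (hg _ (hmem θ)).mul_right _
  have habsm : ∀ θ : ℝ, ‖Complex.exp (-(m:ℂ) * θ * I)‖ = 1 := by
    intro θ
    rw [show (-(m:ℂ) * θ * I) = ((-(m:ℝ) * θ : ℝ) : ℂ) * I by push_cast; ring]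
    exact Complex.norm_exp_ofReal_mul_I _
  have hFnorm : ∀ n θ, ‖F n θ‖ = ‖c n‖ * r ^ n := by
    intro n θ
    rw [hF]
    simp only [norm_mul, norm_pow, Complex.norm_real, Real.norm_eq_abs,
      _root_.abs_of_nonneg hr0.le, habs θ, habsm θ, mul_one]
  have hFcont : ∀ n, Continuous (F n) := by
    intro n
    apply Continuous.mul
    apply Continuous.mul continuous_const
    · exact (continuous_const.mul (Complex.continuous_exp.comp
        (Complex.continuous_ofReal.mul continuous_const))).pow n
    · exact Complex.continuous_exp.comp
        ((continuous_const.mul Complex.continuous_ofReal).mul continuous_const)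
  have hFint : ∀ n, IntegrableOn (F n) (Set.Ioc (0:ℝ) (2*π)) :=
    fun n => (hFcont n).integrableOn_Ioc
  have hnormint : ∀ n, (∫ θ in Set.Ioc (0:ℝ) (2*π), ‖F n θ‖) = (2*π) * (‖c n‖ * r ^ n) := by
    intro n
    simp_rw [hFnorm n]
    rw [setIntegral_const, Real.volume_real_Ioc_of_le (by positivity), smul_eq_mul]
    ring_nf
  have hsumnorm : Summable (fun n => ∫ θ in Set.Ioc (0:ℝ) (2*π), ‖F n θ‖) := by
    simp_rw [hnormint]
    exact (summable_coeff_aux hg hr0.le hr).mul_left _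
  have hkey := MeasureTheory.hasSum_integral_of_summable_integral_norm hFint hsumnorm
  have htsum : ∀ θ : ℝ, ∑' n, F n θ =
      g ((r:ℂ) * Complex.exp (θ * I)) * Complex.exp (-(m:ℂ) * θ * I) :=
    fun θ => (hptsum θ).tsum_eq
  simp_rw [htsum] at hkey
  -- compute each integral
  have hint : ∀ n, (∫ θ in Set.Ioc (0:ℝ) (2*π), F n θ)
      = if n = m then c m * (r:ℝ)^m * ((2*π : ℝ):ℂ) else 0 := by
    intro n
    have hFn : ∀ θ : ℝ, F n θ = (c n * (r:ℝ)^n) * Complex.exp ((((n:ℤ) - (m:ℤ) : ℤ):ℂ) * θ * I) := by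
      intro θ
      have e1 : ((r:ℂ) * Complex.exp ((θ:ℂ) * I))^n = ((r:ℂ))^n * Complex.exp ((n:ℂ) * θ * I) := by
        rw [mul_pow, ← Complex.exp_nat_mul]
        ring_nf
      have e2 : Complex.exp ((((n:ℤ) - (m:ℤ) : ℤ):ℂ) * θ * I)
          = Complex.exp ((n:ℂ)*θ*I) * Complex.exp (-(m:ℂ)*θ*I) := by
        rw [← Complex.exp_add]
        push_cast
        ring_nf
      rw [hF, e2]
      simp only [e1]
      push_cast
      ring
    simp_rw [hFn]
    rw [MeasureTheory.integral_const_mul, integral_circle_exp]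
    rcases eq_or_ne n m with rfl | hnm
    · simp
    · rw [if_neg (by simpa using sub_ne_zero.mpr (by exact_mod_cast hnm)), if_neg hnm, mul_zero]
  simp_rw [hint] at hkey
  have := (hasSum_ite_eq m (c m * (r:ℝ)^m * ((2*π : ℝ):ℂ))).unique hkey
  rw [← this]
  push_cast
  ring

lemma integral_mul_conj_poly {c : ℕ → ℂ} {g : ℂ → ℂ}
    (hg : ∀ z ∈ ball (0:ℂ) 1, HasSum (fun n => c n * z ^ n) (g z))
    {r : ℝ} (hr0 : 0 < r) (hr : r < 1) (d : ℕ → ℂ) (N : ℕ) :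
    ∫ θ in Set.Ioc (0:ℝ) (2*π),
        g ((r:ℂ) * Complex.exp (θ * I)) *
          (starRingEnd ℂ) (∑ m ∈ range N, d m * ((r:ℂ) * Complex.exp (θ * I)) ^ m)
      = ((2*π : ℝ) : ℂ) * ∑ m ∈ range N, (starRingEnd ℂ) (d m * (r:ℝ)^m) * (c m * (r:ℝ)^m) := by
  have hgc := continuous_circle hg hr0.le hr
  have hconj : ∀ θ : ℝ, ∀ m : ℕ,
      (starRingEnd ℂ) (d m * ((r:ℂ) * Complex.exp ((θ:ℂ) * I)) ^ m)
        = (starRingEnd ℂ) (d m * (r:ℝ)^m) * Complex.exp (-(m:ℂ) * θ * I) := by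
    intro θ m
    rw [map_mul, map_mul]
    have h1 : (starRingEnd ℂ) (((r:ℂ) * Complex.exp ((θ:ℂ) * I)) ^ m)
        = ((r:ℂ))^m * Complex.exp (-(m:ℂ) * θ * I) := by
      rw [map_pow, map_mul, Complex.conj_ofReal, ← Complex.exp_conj]
      have : (starRingEnd ℂ) ((θ:ℂ) * I) = -((θ:ℂ) * I) := by
        rw [map_mul, Complex.conj_ofReal, Complex.conj_I]
        ring
      rw [this, mul_pow, ← Complex.exp_nat_mul]
      push_cast
      ring_nf
    rw [h1, map_pow, Complex.conj_ofReal]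
    push_cast
    ring
  have hsplit : ∀ θ : ℝ,
      g ((r:ℂ) * Complex.exp (θ * I)) *
        (starRingEnd ℂ) (∑ m ∈ range N, d m * ((r:ℂ) * Complex.exp (θ * I)) ^ m)
      = ∑ m ∈ range N, (starRingEnd ℂ) (d m * (r:ℝ)^m) *
          (g ((r:ℂ) * Complex.exp (θ * I)) * Complex.exp (-(m:ℂ) * θ * I)) := by
    intro θ
    rw [map_sum, Finset.mul_sum]
    apply Finset.sum_congr rfl
    intro m _
    rw [hconj θ m]
    ring
  simp_rw [hsplit]
  rw [MeasureTheory.integral_finset_sum]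
  · rw [Finset.mul_sum]
    apply Finset.sum_congr rfl
    intro m _
    rw [MeasureTheory.integral_const_mul, integral_coeff hg hr0 hr m]
    ring
  · intro m _
    apply Continuous.integrableOn_Ioc
    exact continuous_const.mul (hgc.mul (Complex.continuous_exp.comp
      ((continuous_const.mul Complex.continuous_ofReal).mul continuous_const)))

lemma bessel_ineq {c : ℕ → ℂ} {g : ℂ → ℂ}
    (hg : ∀ z ∈ ball (0:ℂ) 1, HasSum (fun n => c n * z ^ n) (g z))
    {r : ℝ} (hr0 : 0 < r) (hr : r < 1) (N : ℕ) :
    (2*π) * ∑ m ∈ range N, ‖c m‖^2 * r^(2*m)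
      ≤ ∫ θ in Set.Ioc (0:ℝ) (2*π), ‖g ((r:ℂ) * Complex.exp (θ * I))‖^2 := by
  have hgc := continuous_circle hg hr0.le hr
  set S : ℂ → ℂ := fun z => ∑ m ∈ range N, c m * z ^ m with hSdef
  set cN : ℕ → ℂ := fun n => if n < N then c n else 0 with hcN
  have hS : ∀ z ∈ ball (0:ℂ) 1, HasSum (fun n => cN n * z ^ n) (S z) := by
    intro z _
    have h0 : ∀ n ∉ range N, cN n * z ^ n = 0 := by
      intro n hn
      simp only [Finset.mem_range, not_lt] at hn
      simp [hcN, Nat.not_lt.mpr hn]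
    have : HasSum (fun n => cN n * z ^ n) (∑ n ∈ range N, cN n * z ^ n) :=
      hasSum_sum_of_ne_finset_zero h0
    convert this using 1
    rw [hSdef]
    apply Finset.sum_congr rfl
    intro m hm
    simp [hcN, Finset.mem_range.mp hm]
  have hSc : Continuous fun θ : ℝ => S ((r:ℂ) * Complex.exp (θ * I)) := by
    apply continuous_finset_sum
    intro m _
    exact continuous_const.mul ((continuous_const.mul (Complex.continuous_exp.comp
      (Complex.continuous_ofReal.mul continuous_const))).pow m)
  set K : ℝ := ∑ m ∈ range N, ‖c m‖^2 * r^(2*m) with hK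
  -- the two inner products
  have hB := integral_mul_conj_poly hg hr0 hr c N
  have hC := integral_mul_conj_poly hS hr0 hr c N
  have hval : ∀ m ∈ range N, (starRingEnd ℂ) (c m * (r:ℝ)^m) * (c m * (r:ℝ)^m)
      = ((‖c m‖^2 * r^(2*m) : ℝ) : ℂ) := by
    intro m _
    rw [Complex.conj_mul']
    rw [norm_mul, norm_pow, Complex.norm_real, Real.norm_eq_abs, _root_.abs_of_nonneg hr0.le]
    push_cast
    ring
  have hcNval : ∀ m ∈ range N, (starRingEnd ℂ) (c m * (r:ℝ)^m) * (cN m * (r:ℝ)^m)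
      = ((‖c m‖^2 * r^(2*m) : ℝ) : ℂ) := by
    intro m hm
    rw [show cN m = c m by simp [hcN, Finset.mem_range.mp hm]]
    exact hval m hm
  rw [Finset.sum_congr rfl hval] at hB
  rw [Finset.sum_congr rfl hcNval] at hC
  rw [← Complex.ofReal_sum, ← hK] at hB hC
  -- expand the square
  have hptwise : ∀ θ : ℝ,
      ‖g ((r:ℂ) * Complex.exp (θ * I)) - S ((r:ℂ) * Complex.exp (θ * I))‖^2
      = ‖g ((r:ℂ) * Complex.exp (θ * I))‖^2
        - 2 * (g ((r:ℂ) * Complex.exp (θ * I)) *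
            (starRingEnd ℂ) (S ((r:ℂ) * Complex.exp (θ * I)))).re
        + ‖S ((r:ℂ) * Complex.exp (θ * I))‖^2 := by
    intro θ
    set x := g ((r:ℂ) * Complex.exp (θ * I))
    set y := S ((r:ℂ) * Complex.exp (θ * I))
    rw [Complex.sq_norm, Complex.sq_norm, Complex.sq_norm]
    rw [Complex.normSq_sub]
    ring
  have hIg : IntegrableOn (fun θ : ℝ => ‖g ((r:ℂ) * Complex.exp (θ * I))‖^2)
      (Set.Ioc (0:ℝ) (2*π)) := ((hgc.norm.pow 2)).integrableOn_Ioc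
  have hIS : IntegrableOn (fun θ : ℝ => ‖S ((r:ℂ) * Complex.exp (θ * I))‖^2)
      (Set.Ioc (0:ℝ) (2*π)) := ((hSc.norm.pow 2)).integrableOn_Ioc
  have hIgS : IntegrableOn (fun θ : ℝ => (g ((r:ℂ) * Complex.exp (θ * I)) *
      (starRingEnd ℂ) (S ((r:ℂ) * Complex.exp (θ * I)))).re) (Set.Ioc (0:ℝ) (2*π)) :=
    ((Complex.continuous_re.comp (hgc.mul (Complex.continuous_conj.comp hSc)))).integrableOn_Ioc
  have hIgSc : IntegrableOn (fun θ : ℝ => g ((r:ℂ) * Complex.exp (θ * I)) *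
      (starRingEnd ℂ) (S ((r:ℂ) * Complex.exp (θ * I)))) (Set.Ioc (0:ℝ) (2*π)) :=
    (hgc.mul (Complex.continuous_conj.comp hSc)).integrableOn_Ioc
  have hISSc : IntegrableOn (fun θ : ℝ => S ((r:ℂ) * Complex.exp (θ * I)) *
      (starRingEnd ℂ) (S ((r:ℂ) * Complex.exp (θ * I)))) (Set.Ioc (0:ℝ) (2*π)) :=
    (hSc.mul (Complex.continuous_conj.comp hSc)).integrableOn_Ioc
  have hI1 : IntegrableOn (fun θ : ℝ => ‖g ((r:ℂ) * Complex.exp (θ * I))‖^2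
      - 2 * (g ((r:ℂ) * Complex.exp (θ * I)) *
          (starRingEnd ℂ) (S ((r:ℂ) * Complex.exp (θ * I)))).re) (Set.Ioc (0:ℝ) (2*π)) :=
    ((hgc.norm.pow 2).sub (continuous_const.mul
      (Complex.continuous_re.comp (hgc.mul (Complex.continuous_conj.comp hSc))))).integrableOn_Ioc
  have hpos : 0 ≤ ∫ θ in Set.Ioc (0:ℝ) (2*π),
      ‖g ((r:ℂ) * Complex.exp (θ * I)) - S ((r:ℂ) * Complex.exp (θ * I))‖^2 :=
    MeasureTheory.setIntegral_nonneg measurableSet_Ioc (fun θ _ => by positivity)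
  have hexp : (∫ θ in Set.Ioc (0:ℝ) (2*π),
      ‖g ((r:ℂ) * Complex.exp (θ * I)) - S ((r:ℂ) * Complex.exp (θ * I))‖^2)
      = (∫ θ in Set.Ioc (0:ℝ) (2*π), ‖g ((r:ℂ) * Complex.exp (θ * I))‖^2)
        - 2 * (∫ θ in Set.Ioc (0:ℝ) (2*π), (g ((r:ℂ) * Complex.exp (θ * I)) *
            (starRingEnd ℂ) (S ((r:ℂ) * Complex.exp (θ * I)))).re)
        + ∫ θ in Set.Ioc (0:ℝ) (2*π), ‖S ((r:ℂ) * Complex.exp (θ * I))‖^2 := by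
    simp_rw [hptwise]
    rw [MeasureTheory.integral_add hI1 hIS, MeasureTheory.integral_sub hIg
      ((hIgS.const_mul 2 : IntegrableOn _ _ _)), MeasureTheory.integral_const_mul]
  -- compute the middle and last terms
  have hmid : (∫ θ in Set.Ioc (0:ℝ) (2*π), (g ((r:ℂ) * Complex.exp (θ * I)) *
      (starRingEnd ℂ) (S ((r:ℂ) * Complex.exp (θ * I)))).re) = (2*π) * K := by
    have := integral_re hIgSc
    simp only [RCLike.re_to_complex] at this
    rw [this, hB]
    simp
  have hlast : (∫ θ in Set.Ioc (0:ℝ) (2*π), ‖S ((r:ℂ) * Complex.exp (θ * I))‖^2) = (2*π) * K := by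
    have hps : ∀ θ : ℝ, ‖S ((r:ℂ) * Complex.exp (θ * I))‖^2
        = (S ((r:ℂ) * Complex.exp (θ * I)) *
            (starRingEnd ℂ) (S ((r:ℂ) * Complex.exp (θ * I)))).re := by
      intro θ
      rw [Complex.mul_conj, Complex.ofReal_re, Complex.sq_norm]
    simp_rw [hps]
    have := integral_re hISSc
    simp only [RCLike.re_to_complex] at this
    rw [this, hC]
    simp
  rw [hexp, hmid, hlast] at hpos
  linarith

lemma coeff_sq_sum_le {c d : ℕ → ℂ} {F G : ℂ → ℂ}
    (hF : ∀ z ∈ ball (0:ℂ) 1, HasSum (fun n => c n * z ^ n) (F z))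
    (hG : ∀ z ∈ ball (0:ℂ) 1, HasSum (fun n => d n * z ^ n) (G z))
    (hle : ∀ z ∈ ball (0:ℂ) 1, ‖F z‖ ≤ ‖G z‖) (N : ℕ)
    (hd : ∀ n, N ≤ n → d n = 0) :
    ∑ n ∈ range N, ‖c n‖^2 ≤ ∑ n ∈ range N, ‖d n‖^2 := by
  have key : ∀ r : ℝ, 0 < r → r < 1 →
      ∑ n ∈ range N, ‖c n‖^2 * r^(2*n) ≤ ∑ n ∈ range N, ‖d n‖^2 := by
    intro r hr0 hr
    have h1 := bessel_ineq hF hr0 hr N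
    -- G is a polynomial
    have hGpoly : ∀ z ∈ ball (0:ℂ) 1, G z = ∑ m ∈ range N, d m * z ^ m := by
      intro z hz
      have h0 : ∀ n ∉ range N, d n * z ^ n = 0 := by
        intro n hn
        rw [hd n (by simpa using hn)]
        ring
      exact (hG z hz).unique (hasSum_sum_of_ne_finset_zero h0)
    have hGc := continuous_circle hG hr0.le hr
    have hmem : ∀ θ : ℝ, ((r:ℂ) * Complex.exp ((θ:ℂ) * I)) ∈ ball (0:ℂ) 1 := by
      intro θ
      simp only [mem_ball, dist_zero_right, norm_mul, Complex.norm_real, Real.norm_eq_abs,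
        _root_.abs_of_nonneg hr0.le, Complex.norm_exp_ofReal_mul_I,
        mul_one]
      exact hr
    -- Parseval for G
    have hps : ∀ θ : ℝ, ‖G ((r:ℂ) * Complex.exp (θ * I))‖^2
        = (G ((r:ℂ) * Complex.exp (θ * I)) *
            (starRingEnd ℂ) (G ((r:ℂ) * Complex.exp (θ * I)))).re := by
      intro θ
      rw [Complex.mul_conj, Complex.ofReal_re, Complex.sq_norm]
    have hGint : IntegrableOn (fun θ : ℝ => G ((r:ℂ) * Complex.exp (θ * I)) *
        (starRingEnd ℂ) (G ((r:ℂ) * Complex.exp (θ * I)))) (Set.Ioc (0:ℝ) (2*π)) :=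
      (hGc.mul (Complex.continuous_conj.comp hGc)).integrableOn_Ioc
    have hCval := integral_mul_conj_poly hG hr0 hr d N
    have hcongr : (∫ θ in Set.Ioc (0:ℝ) (2*π), G ((r:ℂ) * Complex.exp (θ * I)) *
          (starRingEnd ℂ) (∑ m ∈ range N, d m * ((r:ℂ) * Complex.exp (θ * I)) ^ m))
        = ∫ θ in Set.Ioc (0:ℝ) (2*π), G ((r:ℂ) * Complex.exp (θ * I)) *
          (starRingEnd ℂ) (G ((r:ℂ) * Complex.exp (θ * I))) := by
      apply MeasureTheory.setIntegral_congr_fun measurableSet_Ioc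
      intro θ _
      simp only [hGpoly _ (hmem θ)]
    rw [hcongr] at hCval
    have hval : ∀ m ∈ range N, (starRingEnd ℂ) (d m * (r:ℝ)^m) * (d m * (r:ℝ)^m)
        = ((‖d m‖^2 * r^(2*m) : ℝ) : ℂ) := by
      intro m _
      rw [Complex.conj_mul']
      rw [norm_mul, norm_pow, Complex.norm_real, Real.norm_eq_abs, _root_.abs_of_nonneg hr0.le]
      push_cast
      ring
    rw [Finset.sum_congr rfl hval, ← Complex.ofReal_sum] at hCval
    have hGval : (∫ θ in Set.Ioc (0:ℝ) (2*π), ‖G ((r:ℂ) * Complex.exp (θ * I))‖^2)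
        = (2*π) * ∑ m ∈ range N, ‖d m‖^2 * r^(2*m) := by
      simp_rw [hps]
      have := integral_re hGint
      simp only [RCLike.re_to_complex] at this
      rw [this, hCval, ← Complex.ofReal_mul, Complex.ofReal_re]
    have h2 : (∫ θ in Set.Ioc (0:ℝ) (2*π), ‖F ((r:ℂ) * Complex.exp (θ * I))‖^2)
        ≤ ∫ θ in Set.Ioc (0:ℝ) (2*π), ‖G ((r:ℂ) * Complex.exp (θ * I))‖^2 := by
      apply MeasureTheory.setIntegral_mono_on
        ((continuous_circle hF hr0.le hr).norm.pow 2).integrableOn_Ioc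
        (hGc.norm.pow 2).integrableOn_Ioc measurableSet_Ioc
      intro θ _
      have := hle _ (hmem θ)
      exact pow_le_pow_left₀ (norm_nonneg _) this 2
    have h3 : ∑ m ∈ range N, ‖d m‖^2 * r^(2*m) ≤ ∑ m ∈ range N, ‖d m‖^2 := by
      apply Finset.sum_le_sum
      intro m _
      have : r^(2*m) ≤ 1 := pow_le_one₀ hr0.le hr.le
      nlinarith [sq_nonneg ‖d m‖]
    have h2pi : (0:ℝ) < 2*π := Real.two_pi_pos
    nlinarith [h1, h2, hGval, h3]
  -- take the limit r → 1⁻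
  have hcont : Filter.Tendsto (fun r : ℝ => ∑ n ∈ range N, ‖c n‖^2 * r^(2*n))
      (nhdsWithin 1 (Set.Iio 1)) (nhds (∑ n ∈ range N, ‖c n‖^2 * (1:ℝ)^(2*n))) := by
    apply Filter.Tendsto.mono_left _ nhdsWithin_le_nhds
    exact (Continuous.tendsto (by continuity) 1)
  simp only [one_pow, mul_one] at hcont
  apply le_of_tendsto hcont
  filter_upwards [Ioo_mem_nhdsLT_of_mem
    (show (1:ℝ) ∈ Set.Ioc (0:ℝ) 1 from Set.mem_Ioc.mpr ⟨by norm_num, le_refl 1⟩)] with r hr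
  exact key r hr.1 hr.2

lemma clunie_numeric {lam : ℝ} (hlam : 1 < lam) :
    ∀ l : ℕ, ∑ n ∈ range l, ((2*lam - n)^2 - n^2) *
        (∏ j ∈ range n, (2*lam - j)/(j+1))^2
      = (l:ℝ)^2 * (∏ j ∈ range l, (2*lam - j)/(j+1))^2 := by
  intro l
  induction l with
  | zero => simp
  | succ l ih =>
    rw [Finset.sum_range_succ, ih, Finset.prod_range_succ]
    have hl1 : ((l:ℝ) + 1) ≠ 0 := by positivity
    generalize (∏ j ∈ range l, (2*lam - (j:ℝ))/(j+1)) = P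
    field_simp
    push_cast
    ring

lemma exists_hasSum_of_differentiableOn {Q : ℂ → ℂ}
    (hQ : DifferentiableOn ℂ Q (ball (0:ℂ) 1)) :
    ∃ q : ℕ → ℂ, ∀ z ∈ ball (0:ℂ) 1, HasSum (fun n => q n * z ^ n) (Q z) := by
  have hhalf : ((2⁻¹ : ℝ≥0) : ℝ) < 1 := by norm_num
  have hps2 := (hQ.mono (closedBall_subset_ball (by norm_num))).hasFPowerSeriesOnBall
    (R := (2⁻¹ : ℝ≥0)) (by norm_num)
  refine ⟨fun n => (cauchyPowerSeries Q 0 (2⁻¹ : ℝ≥0)).coeff n, ?_⟩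
  intro z hz
  have hz1 : ‖z‖ < 1 := by simpa using hz
  have hmax : max ‖z‖ (2⁻¹ : ℝ) < 1 := max_lt hz1 (by norm_num)
  set Rr : ℝ := (max ‖z‖ (2⁻¹ : ℝ) + 1) / 2 with hRr
  have hRr0 : 0 < Rr := by positivity
  have hRr1 : Rr < 1 := by rw [hRr]; linarith
  have hzR : ‖z‖ < Rr := by
    have := le_max_left ‖z‖ (2⁻¹ : ℝ)
    rw [hRr]; linarith
  have hhR : (2⁻¹ : ℝ) < Rr := by
    have := le_max_right ‖z‖ (2⁻¹ : ℝ)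
    rw [hRr]; linarith
  set R : ℝ≥0 := ⟨Rr, hRr0.le⟩ with hR
  have hps := (hQ.mono (closedBall_subset_ball (show (R:ℝ) < 1 from hRr1))).hasFPowerSeriesOnBall
    (R := R) (by exact_mod_cast hRr0)
  have heqp := hps.hasFPowerSeriesAt.eq_formalMultilinearSeries hps2.hasFPowerSeriesAt
  have hmem : z ∈ EMetric.ball (0:ℂ) R := by
    show edist z 0 < (R : ENNReal)
    rw [edist_zero_right]
    exact_mod_cast (show ‖z‖₊ < R by exact_mod_cast hzR)
  have hsum := hps.hasSum hmem
  rw [zero_add] at hsum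
  have : (fun n => (cauchyPowerSeries Q 0 (2⁻¹ : ℝ≥0)).coeff n * z ^ n)
      = fun n => (cauchyPowerSeries Q 0 (R : ℝ≥0)) n (fun _ => z) := by
    funext n
    rw [FormalMultilinearSeries.apply_eq_pow_smul_coeff, heqp, smul_eq_mul, mul_comm]
  rw [this]
  exact hsum

lemma clunie_star {lam : ℝ} {ω h : ℂ → ℂ} {a : ℕ → ℂ}
    (hωa : AnalyticOn ℂ ω (ball (0:ℂ) 1)) (hωle : ∀ z ∈ ball (0:ℂ) 1, ‖ω z‖ ≤ 1)
    (hha : AnalyticOn ℂ h (ball (0:ℂ) 1))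
    (hKey : ∀ z ∈ ball (0:ℂ) 1, z * deriv h z * (1 - z * ω z) = 2 * (z * ω z))
    (haS : ∀ z ∈ ball (0:ℂ) 1, HasSum (fun n => a n * z ^ n) (Complex.exp (-(lam:ℂ) * h z)))
    (l : ℕ) :
    ∑ n ∈ range (l+1), (n:ℝ)^2 * ‖a n‖^2
      ≤ ∑ n ∈ range l, ‖((n:ℂ) - 2*(lam:ℂ)) * a n‖^2 := by
  set g : ℂ → ℂ := fun z => Complex.exp (-(lam:ℂ) * h z) with hgdef
  have hhd : ∀ z ∈ ball (0:ℂ) 1, HasDerivAt h (deriv h z) z := fun z hz =>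
    (hha.differentiableOn.differentiableAt (isOpen_ball.mem_nhds hz)).hasDerivAt
  have hgd : ∀ z ∈ ball (0:ℂ) 1, HasDerivAt g (-(lam:ℂ) * deriv h z * g z) z := by
    intro z hz
    have := ((hhd z hz).const_mul (-(lam:ℂ))).cexp
    rw [show -(lam:ℂ) * deriv h z * g z = cexp (-↑lam * h z) * (-↑lam * deriv h z) by
      simp only [hgdef]; ring]
    exact this
  have hZsum : ∀ z ∈ ball (0:ℂ) 1,
      HasSum (fun n : ℕ => (n:ℂ) * a n * z ^ n) (z * (-(lam:ℂ) * deriv h z * g z)) := by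
    intro z hz
    obtain ⟨D, hD, hDs⟩ := hasDerivAt_of_hasSum (haS) hz
    have hDval : D = -(lam:ℂ) * deriv h z * g z := hD.unique (hgd z hz)
    rw [hDval] at hDs
    have h1 := hDs.mul_left z
    set w : ℕ → ℂ := fun n => (n:ℂ) * a n * z ^ n with hw
    have h2 : (fun n : ℕ => w (n+1)) = fun n : ℕ => z * (((n:ℂ)+1) * a (n+1) * z ^ n) := by
      funext n
      rw [hw]
      push_cast
      ring
    have h3 : HasSum (fun n : ℕ => w (n+1)) (z * (-(lam:ℂ) * deriv h z * g z)) := by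
      rw [h2]; exact h1
    have h4 := (hasSum_nat_add_iff (f := w) 1).mp h3
    simpa [hw] using h4
  set e : ℕ → ℂ := fun n => ((n:ℂ) - 2*(lam:ℂ)) * a n with he
  set Efun : ℂ → ℂ := fun z => z * (-(lam:ℂ) * deriv h z * g z) - 2*(lam:ℂ) * g z with hEdef
  have hEsum : ∀ z ∈ ball (0:ℂ) 1, HasSum (fun n => e n * z ^ n) (Efun z) := by
    intro z hz
    have := (hZsum z hz).sub ((haS z hz).mul_left (2*(lam:ℂ)))
    have heq : (fun n : ℕ => (n:ℂ) * a n * z ^ n - 2*(lam:ℂ) * (a n * z ^ n))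
        = fun n => e n * z ^ n := by
      funext n
      rw [he]
      ring
    rw [heq] at this
    exact this
  have hFeq0 : ∀ z ∈ ball (0:ℂ) 1,
      z * (-(lam:ℂ) * deriv h z * g z) = z * ω z * Efun z := by
    intro z hz
    rw [hEdef]
    linear_combination (-(lam:ℂ) * g z) * hKey z hz
  -- tail function
  set Tt : ℂ → ℂ := fun z => ∑' n, e (n+l) * z ^ n with hTt
  have hT : ∀ z ∈ ball (0:ℂ) 1, HasSum (fun n => e (n+l) * z ^ n) (Tt z) := by
    intro z hz
    apply Summable.hasSum
    rcases eq_or_ne z 0 with rfl | hz0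
    · apply summable_of_ne_finset_zero (s := {0})
      intro n hn
      simp only [Finset.mem_singleton] at hn
      simp [zero_pow hn]
    · have hz1 : ‖z‖ < 1 := by simpa using hz
      have hS := summable_coeff_aux hEsum (norm_nonneg z) hz1
      have hS2 := (summable_nat_add_iff l).mpr hS
      apply Summable.of_norm
      have hzn : (0:ℝ) < ‖z‖ := norm_pos_iff.mpr hz0
      have := hS2.mul_left ((‖z‖^l)⁻¹)
      apply this.congr
      intro n
      have h1 : ‖e (n+l) * z^n‖ = ‖e (n+l)‖ * ‖z‖^n := by rw [norm_mul, norm_pow]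
      have h2 : (‖z‖^l) ≠ 0 := pow_ne_zero _ hzn.ne'
      rw [h1, pow_add, show (‖z‖ ^ l)⁻¹ * (‖e (n + l)‖ * (‖z‖ ^ n * ‖z‖ ^ l))
        = (‖e (n + l)‖ * ‖z‖ ^ n) * ((‖z‖ ^ l)⁻¹ * ‖z‖ ^ l) from by ring,
        inv_mul_cancel₀ h2, mul_one]
  have hTd : ∀ z ∈ ball (0:ℂ) 1, DifferentiableAt ℂ Tt z := by
    intro z hz
    obtain ⟨D, hD, -⟩ := hasDerivAt_of_hasSum hT hz
    exact hD.differentiableAt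
  obtain ⟨q, hQsum⟩ : ∃ q : ℕ → ℂ, ∀ z ∈ ball (0:ℂ) 1,
      HasSum (fun n => q n * z ^ n) (ω z * Tt z) := by
    apply exists_hasSum_of_differentiableOn
    intro z hz
    exact ((hωa.differentiableOn z hz).mul ((hTd z hz).differentiableWithinAt))
  set cF : ℕ → ℂ := fun n => (n:ℂ) * a n - (if l+1 ≤ n then q (n - (l+1)) else 0) with hcF
  set F : ℂ → ℂ := fun z => z * (-(lam:ℂ) * deriv h z * g z) - z^(l+1) * (ω z * Tt z)
    with hFdef
  have hFsum : ∀ z ∈ ball (0:ℂ) 1, HasSum (fun n => cF n * z ^ n) (F z) := by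
    intro z hz
    set v : ℕ → ℂ := fun n => (if l+1 ≤ n then q (n - (l+1)) else 0) * z ^ n with hv
    have h1 := (hQsum z hz).mul_left (z^(l+1))
    have h2 : (fun n : ℕ => v (n + (l+1))) = fun n : ℕ => z^(l+1) * (q n * z ^ n) := by
      funext n
      simp only [hv]
      rw [if_pos (by omega), Nat.add_sub_cancel, pow_add]
      ring
    have h3 : HasSum (fun n : ℕ => v (n + (l+1))) (z^(l+1) * (ω z * Tt z)) := by
      rw [h2]; exact h1
    have h4 := (hasSum_nat_add_iff (f := v) (l+1)).mp h3
    have h5 : ∑ i ∈ range (l+1), v i = 0 := by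
      apply Finset.sum_eq_zero
      intro i hi
      simp only [hv]
      rw [if_neg (by simp at hi; omega)]
      ring
    rw [h5, add_zero] at h4
    have h6 := (hZsum z hz).sub h4
    have heq : (fun n : ℕ => (n:ℂ) * a n * z ^ n - v n) = fun n => cF n * z ^ n := by
      funext n
      rw [hcF, hv]
      ring
    rw [heq] at h6
    exact h6
  have hsplit : ∀ z ∈ ball (0:ℂ) 1,
      Efun z = (∑ n ∈ range l, e n * z ^ n) + z^l * Tt z := by
    intro z hz
    have h5 := (hasSum_nat_add_iff' (f := fun n => e n * z ^ n) l).mpr (hEsum z hz)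
    have h6 := (hT z hz).mul_left (z^l)
    have h7 : (fun n : ℕ => z^l * (e (n+l) * z ^ n)) = fun n : ℕ => e (n+l) * z ^ (n+l) := by
      funext n
      rw [pow_add]
      ring
    rw [h7] at h6
    have := h5.unique h6
    linear_combination this
  have hFG : ∀ z ∈ ball (0:ℂ) 1, ‖F z‖ ≤ ‖z * ∑ n ∈ range l, e n * z ^ n‖ := by
    intro z hz
    have hFval : F z = (z * ω z) * (∑ n ∈ range l, e n * z ^ n) := by
      rw [hFdef]
      simp only
      linear_combination hFeq0 z hz + (z * ω z) * (hsplit z hz)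
    rw [hFval, norm_mul, norm_mul, norm_mul]
    apply mul_le_mul_of_nonneg_right _ (norm_nonneg _)
    calc ‖z‖ * ‖ω z‖ ≤ ‖z‖ * 1 := by
          apply mul_le_mul_of_nonneg_left (hωle z hz) (norm_nonneg z)
      _ = ‖z‖ := mul_one _
  set dG : ℕ → ℂ := fun n => if 1 ≤ n ∧ n ≤ l then e (n-1) else 0 with hdG
  have hGsum : ∀ z ∈ ball (0:ℂ) 1,
      HasSum (fun n => dG n * z ^ n) (z * ∑ n ∈ range l, e n * z ^ n) := by
    intro z hz
    have h0 : ∀ n ∉ range (l+1), dG n * z ^ n = 0 := by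
      intro n hn
      simp only [Finset.mem_range, not_lt] at hn
      simp only [hdG]
      rw [if_neg (by omega)]
      ring
    have : HasSum (fun n => dG n * z ^ n) (∑ n ∈ range (l+1), dG n * z ^ n) :=
      hasSum_sum_of_ne_finset_zero h0
    convert this using 1
    rw [Finset.sum_range_succ']
    have ht0 : dG 0 * z ^ 0 = 0 := by rw [hdG]; simp
    rw [ht0, add_zero, Finset.mul_sum]
    apply Finset.sum_congr rfl
    intro i hi
    simp only [Finset.mem_range] at hi
    simp only [hdG]
    rw [if_pos (by omega), Nat.add_sub_cancel, pow_succ]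
    ring
  have hd0 : ∀ n, l+1 ≤ n → dG n = 0 := by
    intro n hn
    simp only [hdG]
    rw [if_neg (by omega)]
  have hstar := coeff_sq_sum_le hFsum hGsum hFG (l+1) hd0
  -- evaluate both sides
  have hLHS : ∑ n ∈ range (l+1), ‖cF n‖^2 = ∑ n ∈ range (l+1), (n:ℝ)^2 * ‖a n‖^2 := by
    apply Finset.sum_congr rfl
    intro n hn
    simp only [Finset.mem_range] at hn
    simp only [hcF]
    rw [if_neg (by omega), sub_zero, norm_mul, Complex.norm_natCast, mul_pow]
  have hRHS : ∑ n ∈ range (l+1), ‖dG n‖^2 = ∑ n ∈ range l, ‖e n‖^2 := by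
    rw [Finset.sum_range_succ']
    have ht0 : ‖dG 0‖^2 = 0 := by rw [hdG]; simp
    rw [ht0, add_zero]
    apply Finset.sum_congr rfl
    intro i hi
    simp only [Finset.mem_range] at hi
    simp only [hdG]
    rw [if_pos (by omega), Nat.add_sub_cancel]
  rw [hLHS, hRHS] at hstar
  exact hstar

lemma main_bound {lam : ℝ} (hlam : 1 < lam) {ω h : ℂ → ℂ} {a : ℕ → ℂ}
    (hωa : AnalyticOn ℂ ω (ball (0:ℂ) 1)) (hωle : ∀ z ∈ ball (0:ℂ) 1, ‖ω z‖ ≤ 1)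
    (hha : AnalyticOn ℂ h (ball (0:ℂ) 1))
    (hKey : ∀ z ∈ ball (0:ℂ) 1, z * deriv h z * (1 - z * ω z) = 2 * (z * ω z))
    (ha0 : a 0 = 1)
    (haS : ∀ z ∈ ball (0:ℂ) 1, HasSum (fun n => a n * z ^ n) (Complex.exp (-(lam:ℂ) * h z))) :
    ∀ l : ℕ, l ≤ ⌊lam⌋₊ + 1 → ‖a l‖ ≤ ∏ j ∈ range l, (2 * lam - j) / (j + 1) := by
  have hlam0 : 0 < lam := by linarith
  have hfloor : (⌊lam⌋₊ : ℝ) ≤ lam := Nat.floor_le hlam0.le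
  have hcast : ∀ n : ℕ, n ≤ ⌊lam⌋₊ → (n:ℝ) ≤ lam := by
    intro n hn
    calc (n:ℝ) ≤ (⌊lam⌋₊ : ℝ) := Nat.cast_le.mpr hn
      _ ≤ lam := hfloor
  have hCpos : ∀ l : ℕ, l ≤ ⌊lam⌋₊ + 1 → 0 < ∏ j ∈ range l, (2 * lam - j) / (j + 1) := by
    intro l hl
    apply Finset.prod_pos
    intro j hj
    simp only [Finset.mem_range] at hj
    have : (j:ℝ) ≤ lam := hcast j (by omega)
    have h1 : 0 < 2 * lam - j := by linarith
    positivity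
  intro l
  induction l using Nat.strong_induction_on with
  | _ l ih =>
  intro hl
  rcases Nat.eq_zero_or_pos l with rfl | hl1
  · simp [ha0]
  · have hstar := clunie_star hωa hωle hha hKey haS l
    have hERHS : ∀ n ∈ range l, ‖((n:ℂ) - 2*(lam:ℂ)) * a n‖^2 = (2*lam - n)^2 * ‖a n‖^2 := by
      intro n hn
      simp only [Finset.mem_range] at hn
      have hnl : (n:ℝ) ≤ lam := hcast n (by omega)
      rw [norm_mul, show ((n:ℂ) - 2*(lam:ℂ)) = (((n:ℝ) - 2*lam : ℝ) : ℂ) by push_cast; ring,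
        Complex.norm_real, Real.norm_eq_abs, _root_.abs_of_nonpos (by linarith), mul_pow]
      ring
    rw [Finset.sum_congr rfl hERHS] at hstar
    rw [Finset.sum_range_succ] at hstar
    have h1 : (l:ℝ)^2 * ‖a l‖^2 ≤ ∑ n ∈ range l, ((2*lam - n)^2 - (n:ℝ)^2) * ‖a n‖^2 := by
      have hsub : ∑ n ∈ range l, ((2*lam - n)^2 - (n:ℝ)^2) * ‖a n‖^2
          = ∑ n ∈ range l, (2*lam - n)^2 * ‖a n‖^2 - ∑ n ∈ range l, (n:ℝ)^2 * ‖a n‖^2 := by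
        rw [← Finset.sum_sub_distrib]
        apply Finset.sum_congr rfl
        intro n _
        ring
      rw [hsub]
      linarith
    have h2 : ∑ n ∈ range l, ((2*lam - n)^2 - (n:ℝ)^2) * ‖a n‖^2
        ≤ ∑ n ∈ range l, ((2*lam - n)^2 - (n:ℝ)^2) *
          (∏ j ∈ range n, (2 * lam - j) / (j + 1))^2 := by
      apply Finset.sum_le_sum
      intro n hn
      simp only [Finset.mem_range] at hn
      have hnl : (n:ℝ) ≤ lam := hcast n (by omega)
      have hw : 0 ≤ (2*lam - n)^2 - (n:ℝ)^2 := by nlinarith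
      apply mul_le_mul_of_nonneg_left _ hw
      have := ih n hn (by omega)
      have hn0 : (0:ℝ) ≤ ‖a n‖ := norm_nonneg _
      nlinarith
    have h3 := clunie_numeric hlam l
    have hll : (0:ℝ) < (l:ℝ)^2 := by
      have : (0:ℝ) < (l:ℝ) := by exact_mod_cast hl1
      positivity
    have h4 : ‖a l‖^2 ≤ (∏ j ∈ range l, (2 * lam - j) / (j + 1))^2 := by
      nlinarith
    have h5 := Real.sqrt_le_sqrt h4
    rwa [Real.sqrt_sq (norm_nonneg _), Real.sqrt_sq (hCpos l hl).le] at h5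

lemma koebe_coeff {lam : ℝ} (hlam : 1 < lam) {h : ℂ → ℂ} {a' : ℕ → ℂ}
    (hha : AnalyticOn ℂ h (ball (0:ℂ) 1)) (hh0 : h 0 = 0)
    (hfh : ∀ z ∈ ball (0:ℂ) 1, z / (1 - z)^2 = z * Complex.exp (h z))
    (ha0 : a' 0 = 1)
    (haS : ∀ z ∈ ball (0:ℂ) 1, HasSum (fun n => a' n * z ^ n) (Complex.exp (-(lam:ℂ) * h z))) :
    ∀ l : ℕ, l ≤ ⌊lam⌋₊ + 1 → ‖a' l‖ = ∏ j ∈ range l, (2*lam - j)/(j+1) := by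
  have hlam0 : 0 < lam := by linarith
  have hfloor : (⌊lam⌋₊ : ℝ) ≤ lam := Nat.floor_le hlam0.le
  have hne : ∀ z ∈ ball (0:ℂ) 1, (1:ℂ) - z ≠ 0 := by
    intro z hz h0
    have : z = 1 := by linear_combination -h0
    rw [this] at hz
    simp at hz
  have key1 : ∀ z ∈ ball (0:ℂ) 1, Complex.exp (h z) * (1 - z)^2 = 1 := by
    intro z hz
    rcases eq_or_ne z 0 with rfl | hz0
    · simp [hh0]
    · have h1 := hfh z hz
      field_simp [hne z hz] at h1
      apply mul_left_cancel₀ hz0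
      rw [mul_one]
      linear_combination -z * h1
  have hhd : ∀ z ∈ ball (0:ℂ) 1, HasDerivAt h (deriv h z) z := fun z hz =>
    (hha.differentiableOn.differentiableAt (isOpen_ball.mem_nhds hz)).hasDerivAt
  have key2 : ∀ z ∈ ball (0:ℂ) 1, deriv h z * (1 - z) = 2 := by
    intro z hz
    have hsub : HasDerivAt (fun w : ℂ => 1 - w) (-1) z := by
      simpa using (hasDerivAt_id z).const_sub 1
    have hK : HasDerivAt (fun w => Complex.exp (h w) * (1 - w)^2)
        ((Complex.exp (h z) * deriv h z) * (1-z)^2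
          + Complex.exp (h z) * ((2:ℕ) * (1-z)^1 * (-1))) z :=
      ((hhd z hz).cexp).mul (hsub.pow 2)
    have heq : (fun w => Complex.exp (h w) * (1 - w)^2) =ᶠ[nhds z] fun _ => (1:ℂ) := by
      filter_upwards [isOpen_ball.mem_nhds hz] with w hw
      exact key1 w hw
    have hconstK : HasDerivAt (fun w => Complex.exp (h w) * (1 - w)^2) 0 z :=
      (hasDerivAt_const z (1:ℂ)).congr_of_eventuallyEq heq
    have h7 := hK.unique hconstK
    have h8 : Complex.exp (h z) * ((deriv h z * (1-z) - 2) * (1-z)) = 0 := by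
      push_cast at h7
      linear_combination h7
    rcases mul_eq_zero.mp h8 with h9 | h9
    · exact absurd h9 (Complex.exp_ne_zero _)
    · rcases mul_eq_zero.mp h9 with h10 | h10
      · linear_combination h10
      · exact absurd h10 (hne z hz)
  set g : ℂ → ℂ := fun z => Complex.exp (-(lam:ℂ) * h z) with hgdef
  have hgd : ∀ z ∈ ball (0:ℂ) 1, HasDerivAt g (-(lam:ℂ) * deriv h z * g z) z := by
    intro z hz
    have := ((hhd z hz).const_mul (-(lam:ℂ))).cexp
    rw [show -(lam:ℂ) * deriv h z * g z = cexp (-↑lam * h z) * (-↑lam * deriv h z) by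
      simp only [hgdef]; ring]
    exact this
  -- two power series for (1-z) g'
  have hseries1 : ∀ z ∈ ball (0:ℂ) 1,
      HasSum (fun n : ℕ => (((n:ℂ)+1) * a' (n+1) - (n:ℂ) * a' n) * z ^ n)
        (-(2:ℂ)*(lam:ℂ) * g z) := by
    intro z hz
    obtain ⟨D, hD, hDs⟩ := hasDerivAt_of_hasSum haS hz
    have hDval : D = -(lam:ℂ) * deriv h z * g z := hD.unique (hgd z hz)
    -- shifted series for z * D
    have h1 := hDs.mul_left z
    set w : ℕ → ℂ := fun n => (n:ℂ) * a' n * z ^ n with hw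
    have h2 : (fun n : ℕ => w (n+1)) = fun n : ℕ => z * (((n:ℂ)+1) * a' (n+1) * z ^ n) := by
      funext n
      simp only [hw]
      push_cast
      ring
    have h3 : HasSum (fun n : ℕ => w (n+1)) (z * D) := by rw [h2]; exact h1
    have h4 := (hasSum_nat_add_iff (f := w) 1).mp h3
    simp only [range_one, sum_singleton, hw, Nat.cast_zero, zero_mul, add_zero] at h4
    have h5 := hDs.sub h4
    have h6 : (fun n : ℕ => ((n:ℂ)+1) * a' (n+1) * z ^ n - (n:ℂ) * a' n * z ^ n)
        = fun n : ℕ => (((n:ℂ)+1) * a' (n+1) - (n:ℂ) * a' n) * z ^ n := by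
      funext n
      ring
    rw [h6] at h5
    have h7 : D - z * D = -(2:ℂ)*(lam:ℂ) * g z := by
      rw [hDval]
      linear_combination (-(lam:ℂ) * g z) * key2 z hz
    rwa [h7] at h5
  have hseries2 : ∀ z ∈ ball (0:ℂ) 1,
      HasSum (fun n : ℕ => (-(2:ℂ)*(lam:ℂ) * a' n) * z ^ n) (-(2:ℂ)*(lam:ℂ) * g z) := by
    intro z hz
    have := (haS z hz).mul_left (-(2:ℂ)*(lam:ℂ))
    rw [hgdef]
    simpa [mul_assoc] using this
  have hrec := coeff_unique hseries1 hseries2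
  have hrecn : ∀ n : ℕ, ((n:ℂ)+1) * a' (n+1) = ((n:ℂ) - 2*(lam:ℂ)) * a' n := by
    intro n
    have := congrFun hrec n
    linear_combination this
  intro l
  induction l with
  | zero => intro _; simp [ha0]
  | succ l ihl =>
    intro hl
    have hCeq := ihl (by omega)
    have hlle : (l:ℝ) ≤ lam := by
      have : l ≤ ⌊lam⌋₊ := by omega
      calc (l:ℝ) ≤ (⌊lam⌋₊ : ℝ) := Nat.cast_le.mpr this
        _ ≤ lam := hfloor
    have hstep := hrecn l
    have hnorm := congrArg norm hstep
    rw [norm_mul, norm_mul] at hnorm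
    have hn1 : ‖((l:ℂ)+1)‖ = (l:ℝ)+1 := by
      rw [show ((l:ℂ)+1) = (((l:ℝ)+1 : ℝ) : ℂ) by push_cast; ring, Complex.norm_real,
        Real.norm_eq_abs, _root_.abs_of_pos (by positivity)]
    have hn2 : ‖((l:ℂ) - 2*(lam:ℂ))‖ = 2*lam - l := by
      rw [show ((l:ℂ) - 2*(lam:ℂ)) = (((l:ℝ) - 2*lam : ℝ) : ℂ) by push_cast; ring,
        Complex.norm_real, Real.norm_eq_abs, _root_.abs_of_nonpos (by linarith)]
      ring
    rw [hn1, hn2, hCeq] at hnorm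
    have hl1 : (0:ℝ) < (l:ℝ) + 1 := by positivity
    have heval : ‖a' (l+1)‖ = ((2*lam - l) * ∏ j ∈ range l, (2*lam - j)/(j+1)) / ((l:ℝ)+1) := by
      rw [eq_div_iff hl1.ne']
      linear_combination hnorm
    rw [heval, Finset.prod_range_succ]
    ring

/-- The class `S*(A,B)`. -/
def IsJanowskiStarlike (A B : ℝ) (f : ℂ → ℂ) : Prop :=
  AnalyticOn ℂ f (ball 0 1) ∧ f 0 = 0 ∧ deriv f 0 = 1 ∧
    ∃ ω : ℂ → ℂ, AnalyticOn ℂ ω (ball 0 1) ∧ (∀ z ∈ ball (0 : ℂ) 1, ‖ω z‖ ≤ 1) ∧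
      ∀ z ∈ ball (0 : ℂ) 1,
        z * deriv f z * (1 + (B : ℂ) * z * ω z) = f z * (1 + (A : ℂ) * z * ω z)

/-- `a` is the sequence of Taylor coefficients of the branch of `(f z / z) ^ (-lam)`
normalized to equal `1` at the origin. -/
def NegPowCoeff (lam : ℝ) (f : ℂ → ℂ) (a : ℕ → ℂ) : Prop :=
  ∃ h : ℂ → ℂ, AnalyticOn ℂ h (ball 0 1) ∧ h 0 = 0 ∧
    (∀ z ∈ ball (0 : ℂ) 1, f z = z * Complex.exp (h z)) ∧
    a 0 = 1 ∧
    ∀ z ∈ ball (0 : ℂ) 1,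
      HasSum (fun n : ℕ => a n * z ^ n) (Complex.exp (-(lam : ℂ) * h z))

theorem starlike_coeff_bound_large_lambda (lam : ℝ) (hlam : 1 < lam)
    (f : ℂ → ℂ) (hf : IsJanowskiStarlike 1 (-1) f)
    (a : ℕ → ℂ) (ha : NegPowCoeff lam f a) :
    (∀ l : ℕ, 1 ≤ l → l ≤ ⌊lam⌋₊ + 1 →
        ‖a l‖ ≤ ∏ j ∈ Finset.range l, (2 * lam - j) / (j + 1)) ∧
      ∀ a' : ℕ → ℂ, NegPowCoeff lam (fun z => z / (1 - z) ^ 2) a' →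
        ∀ l : ℕ, 1 ≤ l → l ≤ ⌊lam⌋₊ + 1 →
          ‖a' l‖ = ∏ j ∈ Finset.range l, (2 * lam - j) / (j + 1) := by
  obtain ⟨hfa, hf0, hfd1, ω, hωa, hωle, hωeq⟩ := hf
  obtain ⟨h, hha, hh0, hfh, ha0, haS⟩ := ha
  constructor
  · -- the bound
    have hhd : ∀ z ∈ ball (0:ℂ) 1, HasDerivAt h (deriv h z) z := fun z hz =>
      (hha.differentiableOn.differentiableAt (isOpen_ball.mem_nhds hz)).hasDerivAt
    have hKey : ∀ z ∈ ball (0:ℂ) 1, z * deriv h z * (1 - z * ω z) = 2 * (z * ω z) := by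
      intro z hz
      rcases eq_or_ne z 0 with rfl | hz0
      · simp
      · have hfderiv : deriv f z
            = Complex.exp (h z) + z * (Complex.exp (h z) * deriv h z) := by
          have hfd : HasDerivAt (fun w => w * Complex.exp (h w))
              (1 * Complex.exp (h z) + z * (Complex.exp (h z) * deriv h z)) z :=
            (hasDerivAt_id z).mul ((hhd z hz).cexp)
          have heq : f =ᶠ[nhds z] fun w => w * Complex.exp (h w) := by
            filter_upwards [isOpen_ball.mem_nhds hz] with w hw
            exact hfh w hw
          rw [heq.deriv_eq, hfd.deriv]
          ring
        have heqz := hωeq z hz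
        push_cast at heqz
        rw [hfderiv, hfh z hz] at heqz
        have hE := Complex.exp_ne_zero (h z)
        have hAB : (Complex.exp (h z) + z * (Complex.exp (h z) * deriv h z)) * (1 - z * ω z)
            = Complex.exp (h z) * (1 + z * ω z) := by
          apply mul_left_cancel₀ hz0
          linear_combination heqz
        have hC : (1 + z * deriv h z) * (1 - z * ω z) = 1 + z * ω z := by
          apply mul_left_cancel₀ hE
          linear_combination hAB
        linear_combination hC
    intro l _ hl2
    exact main_bound hlam hωa hωle hha hKey ha0 haS l hl2
  · -- sharpness for the Koebe function
    intro a' ha' l _ hl2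
    obtain ⟨h2, hha2, hh02, hfh2, ha02, haS2⟩ := ha'
    exact koebe_coeff hlam hha2 hh02 (fun z hz => hfh2 z hz) ha02 haS2 l hl2
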